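/- Let S ⊆ T be a subspace and let Ω : S × S → ⋀^{p−1} T* be a bilinear map with Ω(X,Y) = −Ω(Y,X) for all X, Y ∈ S. Then the following are equivalent: (i) there exists a linear map η : S → ⋀^p T* such that (η X)(Y, v₁, …, v_{p−1}) = Ω(X,Y)(v₁, …, v_{p−1}) for all X, Y ∈ S and all v₁, …, v_{p−1} ∈ T; (ii) there exists an alternating (p+1)-form ω ∈ ⋀^{p+1} T* such that ω(X, Y, v₁, …, v_{p−1}) = Ω(X,Y)(v₁, …, v_{p−1}) for all X, Y ∈ S and all v₁, …, v_{p−1} ∈ T. -/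
import Mathlib
open Module Function
noncomputable section
namespace Stmt5Aux
variable {T : Type} [AddCommGroup T] [Module ℝ T] {S : Submodule ℝ T} {k : ℕ}

def tailF (Q : T →ₗ[ℝ] T) (i : Fin (k+2)) (v : Fin (k+2) → T) : Fin (k+1) → T :=
  fun j => if (j:ℕ) < (i:ℕ) then Q (v (Fin.castSucc j)) else v (Fin.succ j)

def termF (γ : S →ₗ[ℝ] (T [⋀^Fin (k+1)]→ₗ[ℝ] ℝ)) (π : T →ₗ[ℝ] S) (Q : T →ₗ[ℝ] T)
    (i : Fin (k+2)) (v : Fin (k+2) → T) : ℝ :=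
  (-1:ℝ)^(i:ℕ) * γ (π (v i)) (tailF Q i v)



lemma tailF_update_self {Q : T →ₗ[ℝ] T} {v : Fin (k+2) → T} (m : Fin (k+2)) (x : T) :
    tailF Q m (Function.update v m x) = tailF Q m v := by
  funext j
  simp only [tailF, Function.update_apply, Fin.ext_iff, Fin.coe_castSucc, Fin.val_succ]
  split_ifs <;> first | rfl | omega

lemma tailF_update_lt {Q : T →ₗ[ℝ] T} {v : Fin (k+2) → T} (i m : Fin (k+2)) (h : (m:ℕ) < (i:ℕ)) (x : T)
    (j₀ : Fin (k+1)) (hj₀ : (j₀:ℕ) = (m:ℕ)) :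
    tailF Q i (Function.update v m x) = Function.update (tailF Q i v) j₀ (Q x) := by
  funext j
  simp only [tailF, Function.update_apply, Fin.ext_iff, Fin.coe_castSucc, Fin.val_succ]
  split_ifs <;> first | rfl | omega

lemma tailF_update_gt {Q : T →ₗ[ℝ] T} {v : Fin (k+2) → T} (i m : Fin (k+2)) (h : (i:ℕ) < (m:ℕ)) (x : T)
    (j₀ : Fin (k+1)) (hj₀ : (j₀:ℕ) + 1 = (m:ℕ)) :
    tailF Q i (Function.update v m x) = Function.update (tailF Q i v) j₀ x := by
  funext j
  simp only [tailF, Function.update_apply, Fin.ext_iff, Fin.coe_castSucc, Fin.val_succ]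
  split_ifs <;> first | rfl | omega

variable (γ : S →ₗ[ℝ] (T [⋀^Fin (k+1)]→ₗ[ℝ] ℝ)) (π : T →ₗ[ℝ] S)

lemma termF_update (Q : T →ₗ[ℝ] T) (i m : Fin (k+2)) (hne : i ≠ m) (v : Fin (k+2) → T) :
    ∃ (j₀ : Fin (k+1)) (c : T →ₗ[ℝ] T),
      ∀ y : T, termF γ π Q i (Function.update v m y) =
        (-1:ℝ)^(i:ℕ) * γ (π (v i)) (Function.update (tailF Q i v) j₀ (c y)) := by
  have hne' : (i:ℕ) ≠ (m:ℕ) := fun h => hne (Fin.ext h)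
  rcases lt_or_gt_of_ne hne' with h | h
  · -- i < m : position m-1, c = id
    have hm : 1 ≤ (m:ℕ) := by omega
    refine ⟨⟨(m:ℕ)-1, by have := m.isLt; omega⟩, LinearMap.id, fun y => ?_⟩
    rw [termF, Function.update_of_ne hne,
      tailF_update_gt i m h y ⟨(m:ℕ)-1, by have := m.isLt; omega⟩
        (show (m:ℕ)-1+1 = (m:ℕ) by omega)]
    rfl
  · -- m < i : position m, c = Q
    refine ⟨⟨(m:ℕ), by have := i.isLt; omega⟩, Q, fun y => ?_⟩
    rw [termF, Function.update_of_ne hne,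
      tailF_update_lt i m h y ⟨(m:ℕ), by have := i.isLt; omega⟩ rfl]

def bigF (Q : T →ₗ[ℝ] T) : MultilinearMap ℝ (fun _ : Fin (k+2) => T) ℝ where
  toFun v := ∑ i, termF γ π Q i v
  map_update_add' := by
    intro dec v m x y
    have : dec = instDecidableEqFin _ := Subsingleton.elim _ _
    subst this
    rw [← Finset.sum_add_distrib]
    refine Finset.sum_congr rfl fun i _ => ?_
    by_cases him : i = m
    · subst him
      simp only [termF, tailF_update_self, Function.update_self, map_add,
        AlternatingMap.add_apply, mul_add]
    · obtain ⟨j₀, c, hc⟩ := termF_update γ π Q i m him v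
      rw [hc, hc, hc, map_add, AlternatingMap.map_update_add, mul_add]
  map_update_smul' := by
    intro dec v m r x
    have : dec = instDecidableEqFin _ := Subsingleton.elim _ _
    subst this
    rw [Finset.smul_sum]
    refine Finset.sum_congr rfl fun i _ => ?_
    by_cases him : i = m
    · subst him
      simp only [termF, tailF_update_self, Function.update_self, map_smul,
        AlternatingMap.smul_apply, smul_eq_mul]
      ring
    · obtain ⟨j₀, c, hc⟩ := termF_update γ π Q i m him v
      rw [hc, hc, map_smul, AlternatingMap.map_update_smul]
      simp only [smul_eq_mul]
      ring

@[simp] lemma bigF_apply (Q : T →ₗ[ℝ] T) (v : Fin (k+2) → T) :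
    bigF γ π Q v = ∑ i, termF γ π Q i v := rfl



lemma update_skew (hγ : ∀ (X Y : S) (w : Fin k → T),
      γ (X) (Fin.cons (Y:T) w) = - γ Y (Fin.cons (X:T) w)) (X Y : S) (u : Fin (k+1) → T) (z : Fin (k+1)) :
    γ X (Function.update u z (Y:T)) = - γ Y (Function.update u z (X:T)) := by
  have key : ∀ W : S, (Function.update u z (W:T)) ∘ ⇑(z.cycleRange.symm)
      = Fin.cons (W:T) (u ∘ z.succAbove) := by
    intro W; funext l
    refine Fin.cases ?_ (fun j => ?_) l
    · rw [Function.comp_apply, Fin.cycleRange_symm_zero, Function.update_self, Fin.cons_zero]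
    · rw [Function.comp_apply, Fin.cycleRange_symm_succ, Fin.cons_succ,
        Function.update_of_ne (Fin.succAbove_ne z j)]
      rfl
  have h1 := AlternatingMap.map_perm (γ X) (Function.update u z (Y:T)) z.cycleRange.symm
  have h2 := AlternatingMap.map_perm (γ Y) (Function.update u z (X:T)) z.cycleRange.symm
  rw [key] at h1 h2
  rw [hγ X Y _] at h1
  rcases Int.units_eq_one_or (Equiv.Perm.sign z.cycleRange.symm) with h | h <;>
    rw [h] at h1 h2 <;> simp at h1 h2 <;> linarith

lemma tailF_swap_lt {Q : T →ₗ[ℝ] T} {v : Fin (k+2) → T} (i a b : Fin (k+2))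
    (hab : (a:ℕ)+1 = (b:ℕ)) (hbi : (b:ℕ) < (i:ℕ))
    (j₁ j₂ : Fin (k+1)) (h1 : (j₁:ℕ) = (a:ℕ)) (h2 : (j₂:ℕ) = (b:ℕ)) :
    tailF Q i (v ∘ (Equiv.swap a b)) = tailF Q i v ∘ (Equiv.swap j₁ j₂) := by
  funext j
  simp only [tailF, Function.comp_apply, Equiv.swap_apply_def, Fin.ext_iff,
    Fin.coe_castSucc, Fin.val_succ]
  split_ifs <;>
    first
      | rfl
      | omega
      | (congr 1; apply Fin.ext; simp only [Fin.coe_castSucc, Fin.val_succ]; omega)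
      | (congr 1; congr 1; apply Fin.ext; simp only [Fin.coe_castSucc, Fin.val_succ]; omega)

lemma tailF_swap_gt {Q : T →ₗ[ℝ] T} {v : Fin (k+2) → T} (i a b : Fin (k+2))
    (hab : (a:ℕ)+1 = (b:ℕ)) (hia : (i:ℕ) < (a:ℕ))
    (j₁ j₂ : Fin (k+1)) (h1 : (j₁:ℕ)+1 = (a:ℕ)) (h2 : (j₂:ℕ)+1 = (b:ℕ)) :
    tailF Q i (v ∘ (Equiv.swap a b)) = tailF Q i v ∘ (Equiv.swap j₁ j₂) := by
  funext j
  simp only [tailF, Function.comp_apply, Equiv.swap_apply_def, Fin.ext_iff,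
    Fin.coe_castSucc, Fin.val_succ]
  split_ifs <;>
    first
      | rfl
      | omega
      | (congr 1; apply Fin.ext; simp only [Fin.coe_castSucc, Fin.val_succ]; omega)
      | (congr 1; congr 1; apply Fin.ext; simp only [Fin.coe_castSucc, Fin.val_succ]; omega)

lemma termF_swap (Q : T →ₗ[ℝ] T) (i a b : Fin (k+2)) (hab : (a:ℕ)+1 = (b:ℕ))
    (hia : i ≠ a) (hib : i ≠ b) (v : Fin (k+2) → T) :
    termF γ π Q i (v ∘ Equiv.swap a b) = - termF γ π Q i v := by
  have hvi : (v ∘ Equiv.swap a b) i = v i := by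
    rw [Function.comp_apply, Equiv.swap_apply_of_ne_of_ne hia hib]
  have hia' : (i:ℕ) ≠ (a:ℕ) := fun h => hia (Fin.ext h)
  have hib' : (i:ℕ) ≠ (b:ℕ) := fun h => hib (Fin.ext h)
  unfold termF
  rw [hvi]
  rcases lt_or_gt_of_ne hia' with h | h
  · -- i < a : tail positions a-1, b-1
    have ha1 : 1 ≤ (a:ℕ) := by omega
    have hbk : (b:ℕ) ≤ k+1 := by have := b.isLt; omega
    set j₁ : Fin (k+1) := ⟨(a:ℕ)-1, by omega⟩
    set j₂ : Fin (k+1) := ⟨(b:ℕ)-1, by omega⟩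
    rw [tailF_swap_gt i a b hab h j₁ j₂ (by simp [j₁]; omega) (by simp [j₂]; omega),
      AlternatingMap.map_swap _ _ (show j₁ ≠ j₂ by simp [j₁, j₂, Fin.ext_iff]; omega)]
    ring
  · -- i > a; since i ≠ b, b < i : tail positions a, b
    have hbi : (b:ℕ) < (i:ℕ) := by omega
    have hik : (i:ℕ) ≤ k+1 := by have := i.isLt; omega
    set j₁ : Fin (k+1) := ⟨(a:ℕ), by omega⟩
    set j₂ : Fin (k+1) := ⟨(b:ℕ), by omega⟩
    rw [tailF_swap_lt i a b hab hbi j₁ j₂ rfl rfl,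
      AlternatingMap.map_swap _ _ (show j₁ ≠ j₂ by simp [j₁, j₂, Fin.ext_iff]; omega)]
    ring

lemma pair_sum (Q : T →ₗ[ℝ] T) (hπQ : ∀ t : T, ((π t : T)) = t - Q t)
    (hγ : ∀ (X Y : S) (w : Fin k → T),
      γ (X) (Fin.cons (Y:T) w) = - γ Y (Fin.cons (X:T) w))
    (a b : Fin (k+2)) (hab : (a:ℕ)+1 = (b:ℕ)) (v : Fin (k+2) → T) :
    (termF γ π Q a (v ∘ Equiv.swap a b) + termF γ π Q a v)
      + (termF γ π Q b (v ∘ Equiv.swap a b) + termF γ π Q b v) = 0 := by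
  have hbk := b.isLt
  set z : Fin (k+1) := ⟨(a:ℕ), by omega⟩ with hz
  set τ := tailF Q a v with hτ
  have hva : (v ∘ Equiv.swap a b) a = v b := by
    rw [Function.comp_apply, Equiv.swap_apply_left]
  have hvb : (v ∘ Equiv.swap a b) b = v a := by
    rw [Function.comp_apply, Equiv.swap_apply_right]
  have e0 : γ (π (v a)) τ = γ (π (v a)) (Function.update τ z (v b)) := by
    have hzb : Fin.succ z = b := Fin.ext (by simp [hz]; omega)
    have : τ z = v b := by
      rw [hτ, tailF, if_neg (by simp [hz]), hzb]
    rw [← this, Function.update_eq_self]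
  have e1 : tailF Q a (v ∘ Equiv.swap a b) = Function.update τ z (v a) := by
    funext j
    simp only [hτ, tailF, Function.comp_apply, Equiv.swap_apply_def,
      Function.update_apply, Fin.ext_iff, Fin.coe_castSucc, Fin.val_succ, hz]
    split_ifs <;>
      first
        | rfl
        | omega
        | (congr 1; apply Fin.ext; simp only [Fin.coe_castSucc, Fin.val_succ]; omega)
        | (congr 1; congr 1; apply Fin.ext; simp only [Fin.coe_castSucc, Fin.val_succ]; omega)
  have e2 : tailF Q b v = Function.update τ z (Q (v a)) := by
    funext j
    simp only [hτ, tailF, Function.update_apply, Fin.ext_iff, Fin.coe_castSucc,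
      Fin.val_succ, hz]
    split_ifs <;>
      first
        | rfl
        | omega
        | (congr 1; apply Fin.ext; simp only [Fin.coe_castSucc, Fin.val_succ]; omega)
        | (congr 1; congr 1; apply Fin.ext; simp only [Fin.coe_castSucc, Fin.val_succ]; omega)
  have e3 : tailF Q b (v ∘ Equiv.swap a b) = Function.update τ z (Q (v b)) := by
    funext j
    simp only [hτ, tailF, Function.comp_apply, Equiv.swap_apply_def,
      Function.update_apply, Fin.ext_iff, Fin.coe_castSucc, Fin.val_succ, hz]
    split_ifs <;>
      first
        | rfl
        | omega
        | (congr 1; apply Fin.ext; simp only [Fin.coe_castSucc, Fin.val_succ]; omega)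
        | (congr 1; congr 1; apply Fin.ext; simp only [Fin.coe_castSucc, Fin.val_succ]; omega)
  have hsign : ((-1:ℝ))^(b:ℕ) = -((-1)^(a:ℕ)) := by
    rw [← hab, pow_succ]; ring
  have key1 : γ (π (v a)) (Function.update τ z (v b))
      - γ (π (v a)) (Function.update τ z (Q (v b)))
      = γ (π (v a)) (Function.update τ z ((π (v b) : T))) := by
    rw [← AlternatingMap.map_update_sub, hπQ (v b)]
  have key2 : γ (π (v b)) (Function.update τ z (v a))
      - γ (π (v b)) (Function.update τ z (Q (v a)))
      = γ (π (v b)) (Function.update τ z ((π (v a) : T))) := by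
    rw [← AlternatingMap.map_update_sub, hπQ (v a)]
  have skew := update_skew γ hγ (π (v a)) (π (v b)) τ z
  unfold termF
  rw [hva, hvb, e0, e1, e2, e3, hsign]
  linear_combination ((-1:ℝ))^(a:ℕ) * key1 + ((-1:ℝ))^(a:ℕ) * key2
    + ((-1:ℝ))^(a:ℕ) * skew

lemma bigF_adj (Q : T →ₗ[ℝ] T) (hπQ : ∀ t : T, ((π t : T)) = t - Q t)
    (hγ : ∀ (X Y : S) (w : Fin k → T),
      γ (X) (Fin.cons (Y:T) w) = - γ Y (Fin.cons (X:T) w))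
    (a b : Fin (k+2)) (hab : (a:ℕ)+1 = (b:ℕ)) (v : Fin (k+2) → T) :
    bigF γ π Q (v ∘ Equiv.swap a b) = - bigF γ π Q v := by
  have hab' : a ≠ b := fun h => by rw [h] at hab; omega
  rw [eq_neg_iff_add_eq_zero, bigF_apply, bigF_apply, ← Finset.sum_add_distrib]
  have hcut : ∑ i : Fin (k+2), (termF γ π Q i (v ∘ Equiv.swap a b) + termF γ π Q i v)
      = ∑ i ∈ ({a, b} : Finset (Fin (k+2))),
          (termF γ π Q i (v ∘ Equiv.swap a b) + termF γ π Q i v) := by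
    refine (Finset.sum_subset (Finset.subset_univ _) ?_).symm
    intro i _ hi
    simp only [Finset.mem_insert, Finset.mem_singleton, not_or] at hi
    rw [termF_swap γ π Q i a b hab hi.1 hi.2]
    ring
  rw [hcut, Finset.sum_pair hab']
  exact pair_sum γ π Q hπQ hγ a b hab v

lemma bigF_swap (Q : T →ₗ[ℝ] T) (hπQ : ∀ t : T, ((π t : T)) = t - Q t)
    (hγ : ∀ (X Y : S) (w : Fin k → T),
      γ (X) (Fin.cons (Y:T) w) = - γ Y (Fin.cons (X:T) w))
    (a b : Fin (k+2)) (hab : a ≠ b) (v : Fin (k+2) → T) :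
    bigF γ π Q (v ∘ Equiv.swap a b) = - bigF γ π Q v := by
  have main : ∀ (d : ℕ) (a b : Fin (k+2)), (a:ℕ) < (b:ℕ) → (b:ℕ) - (a:ℕ) ≤ d →
      ∀ v : Fin (k+2) → T, bigF γ π Q (v ∘ Equiv.swap a b) = - bigF γ π Q v := by
    intro d
    induction d with
    | zero => intro a b h1 h2 v; omega
    | succ d ih =>
      intro a b h1 h2 v
      rcases eq_or_lt_of_le (Nat.succ_le_of_lt h1) with h | h
      · exact bigF_adj γ π Q hπQ hγ a b h v
      · set c : Fin (k+2) := ⟨(b:ℕ)-1, by have := b.isLt; omega⟩ with hc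
        have hcb : (c:ℕ)+1 = (b:ℕ) := by simp [hc]; omega
        have hac : (a:ℕ) < (c:ℕ) := by simp [hc]; omega
        have hanec : a ≠ c := fun hh => by rw [hh] at hac; omega
        have haneb : a ≠ b := fun hh => by rw [hh] at h1; omega
        have hswap : Equiv.swap a b = Equiv.swap c b * Equiv.swap a c * Equiv.swap c b := by
          rw [Equiv.swap_mul_swap_mul_swap hanec haneb, Equiv.swap_comm]
        have hcomp : v ∘ ⇑(Equiv.swap a b)
            = ((v ∘ ⇑(Equiv.swap c b)) ∘ ⇑(Equiv.swap a c)) ∘ ⇑(Equiv.swap c b) := by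
          rw [hswap]; rfl
        rw [hcomp, bigF_adj γ π Q hπQ hγ c b hcb,
          ih a c hac (by omega), bigF_adj γ π Q hπQ hγ c b hcb]
        ring
  rcases lt_or_gt_of_ne (fun h => hab (Fin.ext h) : (a:ℕ) ≠ (b:ℕ)) with h | h
  · exact main ((b:ℕ) - (a:ℕ)) a b h le_rfl v
  · rw [Equiv.swap_comm]
    exact main ((a:ℕ) - (b:ℕ)) b a h le_rfl v

def bigA (Q : T →ₗ[ℝ] T) (hπQ : ∀ t : T, ((π t : T)) = t - Q t)
    (hγ : ∀ (X Y : S) (w : Fin k → T),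
      γ (X) (Fin.cons (Y:T) w) = - γ Y (Fin.cons (X:T) w)) :
    T [⋀^Fin (k+2)]→ₗ[ℝ] ℝ :=
  { bigF γ π Q with
    map_eq_zero_of_eq' := by
      intro v i j hv hij
      have hswap : v ∘ ⇑(Equiv.swap i j) = v := by
        funext x
        by_cases h1 : x = i
        · subst h1; rw [Function.comp_apply, Equiv.swap_apply_left, hv]
        · by_cases h2 : x = j
          · subst h2; rw [Function.comp_apply, Equiv.swap_apply_right, hv]
          · rw [Function.comp_apply, Equiv.swap_apply_of_ne_of_ne h1 h2]
      have h := bigF_swap γ π Q hπQ hγ i j hij v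
      rw [hswap] at h
      have : bigF γ π Q v = 0 := by linarith
      exact this }

lemma bigA_coe (Q : T →ₗ[ℝ] T) (hπQ) (hγ) :
    ⇑(bigA γ π Q hπQ hγ) = ⇑(bigF γ π Q) := rfl

lemma bigA_apply (Q : T →ₗ[ℝ] T) (hπQ) (hγ) (v : Fin (k+2) → T) :
    bigA γ π Q hπQ hγ v = ∑ i, termF γ π Q i v := by
  rw [bigA_coe, bigF_apply]

lemma bigA_value (Q : T →ₗ[ℝ] T) (hπQ) (hγ)
    (hπS : ∀ X : S, π (X:T) = X) (hQS : ∀ X : S, Q (X:T) = 0)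
    (X : S) (w : Fin (k+1) → T) :
    bigA γ π Q hπQ hγ (Fin.cons (X:T) w) = γ X w := by
  rw [bigA_apply]
  rw [Finset.sum_eq_single 0]
  · rw [termF]
    have ht : tailF Q 0 (Fin.cons (X:T) w) = w := by
      funext j
      rw [tailF, if_neg (by simp)]
      exact Fin.cons_succ _ _ _
    rw [ht]
    simp [hπS X]
  · intro i _ hi
    have h0 : (0:ℕ) < (i:ℕ) := by
      rcases Nat.eq_zero_or_pos (i:ℕ) with h | h
      · exact absurd (Fin.ext h) hi
      · exact h
    have hz : tailF Q i (Fin.cons (X:T) w) ⟨0, by omega⟩ = 0 := by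
      rw [tailF, if_pos h0]
      have : Fin.castSucc (⟨0, by omega⟩ : Fin (k+1)) = (0 : Fin (k+2)) := rfl
      rw [this, Fin.cons_zero, hQS X]
    rw [termF, AlternatingMap.map_coord_zero _ _ hz, mul_zero]
  · intro h
    exact absurd (Finset.mem_univ _) h

theorem extension (k : ℕ) (γ : S →ₗ[ℝ] (T [⋀^Fin (k+1)]→ₗ[ℝ] ℝ))
    (hγ : ∀ (X Y : S) (w : Fin k → T),
      γ (X) (Fin.cons (Y:T) w) = - γ Y (Fin.cons (X:T) w)) :
    ∃ β : T [⋀^Fin (k+2)]→ₗ[ℝ] ℝ,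
      ∀ (X : S) (w : Fin (k+1) → T), β (Fin.cons (X:T) w) = γ X w := by
  obtain ⟨W, hW⟩ := Submodule.exists_isCompl S
  set π : T →ₗ[ℝ] S := S.linearProjOfIsCompl W hW with hπ
  set Q : T →ₗ[ℝ] T := LinearMap.id - S.subtype.comp π with hQ
  have hπS : ∀ X : S, π (X:T) = X := fun X => Submodule.linearProjOfIsCompl_apply_left hW X
  have hπQ : ∀ t : T, ((π t : T)) = t - Q t := by
    intro t; simp [hQ]
  have hQS : ∀ X : S, Q (X:T) = 0 := by
    intro X; simp [hQ, hπS X]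
  exact ⟨bigA γ π Q hπQ hγ, fun X w => bigA_value γ π Q hπQ hγ hπS hQS X w⟩

end Stmt5Aux

open Stmt5Aux in
theorem stmt5 {T : Type} [AddCommGroup T] [Module ℝ T] [FiniteDimensional ℝ T]
    (q : ℕ) (S : Submodule ℝ T)
    (Ω : S →ₗ[ℝ] S →ₗ[ℝ] (T [⋀^Fin q]→ₗ[ℝ] ℝ))
    (hskew : ∀ X Y : S, Ω X Y = -(Ω Y X)) :
    (∃ η : S →ₗ[ℝ] (T [⋀^Fin (q+1)]→ₗ[ℝ] ℝ),
      ∀ (X Y : S) (v : Fin q → T),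
        ((η X).curryLeft (Y : T)) v = (Ω X Y) v) ↔
    (∃ ω : T [⋀^Fin (q+2)]→ₗ[ℝ] ℝ,
      ∀ (X Y : S) (v : Fin q → T),
        ((ω.curryLeft (X : T)).curryLeft (Y : T)) v = (Ω X Y) v) := by
  constructor
  · rintro ⟨η, hη⟩
    have hη' : ∀ (X Y : S) (v : Fin q → T),
        η X (Fin.cons (Y:T) v) = Ω X Y v := by
      intro X Y v
      have h1 := hη X Y v
      rwa [AlternatingMap.curryLeft_apply_apply] at h1
    have hγ : ∀ (X Y : S) (w : Fin q → T),
        η X (Fin.cons (Y:T) w) = - η Y (Fin.cons (X:T) w) := by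
      intro X Y w
      rw [hη' X Y w, hη' Y X w, hskew X Y, AlternatingMap.neg_apply]
    obtain ⟨β, hβ⟩ := extension q η hγ
    refine ⟨β, fun X Y v => ?_⟩
    rw [AlternatingMap.curryLeft_apply_apply, AlternatingMap.curryLeft_apply_apply]
    have : Matrix.vecCons (X:T) (Matrix.vecCons (Y:T) v)
        = Fin.cons (X:T) (Fin.cons (Y:T) v) := rfl
    rw [this, hβ X (Fin.cons (Y:T) v), hη' X Y v]
  · rintro ⟨ω, hω⟩
    exact ⟨(AlternatingMap.curryLeft ω).comp S.subtype, fun X Y v => hω X Y v⟩
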